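/- arXiv:2601.07997 — 4 statements merged into one kernel-verified Lean document; each statement's English description precedes it below -/
import Mathlib

section
/- Let (c(t)) be a nonnegative square-summable sequence and (Ψ_t) a sequence of m×m symmetric positive definite matrices with eigenvalues uniformly bounded above by ρ_Ψ and, for all t beyond some T_c, satisfying c(t)‖Ψ_t‖ < 1. Then the products Φ(t,k) = ∏_{j=k}^{t} (I - c(j)Ψ_j) are uniformly bounded in operator norm: there exists ρ_Φ > 0 with ‖Φ(t,k)‖² ≤ ρ_Φ for all t ≥ k. -/
open Matrix
open scoped Matrix.Norms.L2Operator

lemma my_norm_one_le (m : ℕ) : ‖(1 : Matrix (Fin m) (Fin m) ℝ)‖ ≤ 1 := by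
  rw [Matrix.cstar_norm_def, _root_.map_one]
  exact ContinuousLinearMap.norm_id_le

lemma my_key {m : ℕ} (c : ℝ) (hc : 0 ≤ c) (Ψ : Matrix (Fin m) (Fin m) ℝ)
    (hΨ : Ψ.PosSemidef) (h2 : c * ‖Ψ‖ ≤ 2) :
    ‖(1 : Matrix (Fin m) (Fin m) ℝ) - c • Ψ‖ ≤ 1 := by
  rw [Matrix.cstar_norm_def]
  refine ContinuousLinearMap.opNorm_le_bound _ zero_le_one fun x => ?_
  simp only [one_mul, map_sub, _root_.map_one, _root_.map_smul, ContinuousLinearMap.sub_apply,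
    ContinuousLinearMap.one_apply, ContinuousLinearMap.smul_apply]
  obtain ⟨v, rfl⟩ : ∃ v : Fin m → ℝ, (WithLp.equiv 2 (Fin m → ℝ)).symm v = x :=
    ⟨WithLp.equiv 2 _ x, by simp⟩
  set S := (open scoped MatrixOrder in CFC.sqrt Ψ) with hS
  have hSps : S.PosSemidef := by open scoped MatrixOrder in exact (CFC.sqrt_nonneg Ψ).posSemidef
  have hSS : S * S = Ψ := by open scoped MatrixOrder in exact CFC.sqrt_mul_sqrt_self Ψ hΨ.nonneg
  have hsymm : Sᵀ = S := by
    rw [← Matrix.conjTranspose_eq_transpose_of_trivial]; exact hSps.1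
  have hdot : ∀ a b : Fin m → ℝ,
      (inner ℝ ((WithLp.equiv 2 (Fin m → ℝ)).symm a) ((WithLp.equiv 2 (Fin m → ℝ)).symm b) : ℝ)
        = a ⬝ᵥ b := by
    intro a b
    simp [PiLp.inner_apply, RCLike.inner_apply, dotProduct, mul_comm]
  have happ : ∀ (A : Matrix (Fin m) (Fin m) ℝ) (a : Fin m → ℝ),
      Matrix.toEuclideanCLM (𝕜 := ℝ) A ((WithLp.equiv 2 (Fin m → ℝ)).symm a)
        = (WithLp.equiv 2 (Fin m → ℝ)).symm (A *ᵥ a) :=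
    fun A a => Matrix.toEuclideanCLM_toLp A a
  have hdp : v ⬝ᵥ (Ψ *ᵥ v) = (S *ᵥ v) ⬝ᵥ (S *ᵥ v) := by
    rw [← hSS, ← Matrix.mulVec_mulVec, Matrix.dotProduct_mulVec]
    congr 1
    rw [← Matrix.mulVec_transpose, hsymm]
  -- abbreviations
  set E := (WithLp.equiv 2 (Fin m → ℝ)).symm
  have hnSv : ‖E (S *ᵥ v)‖ ^ 2 = v ⬝ᵥ (Ψ *ᵥ v) := by
    rw [hdp, ← hdot]
    exact (real_inner_self_eq_norm_sq _).symm
  have hip_nonneg : 0 ≤ v ⬝ᵥ (Ψ *ᵥ v) := by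
    simpa using hΨ.dotProduct_mulVec_nonneg v
  -- norm of S squared equals norm of Ψ
  have hnS : ‖S‖ * ‖S‖ = ‖Ψ‖ := by
    rw [← Matrix.l2_opNorm_conjTranspose_mul_self S, hSps.1, hSS]
  -- bound on ‖Ψ v‖²
  have hΨv : ‖E (Ψ *ᵥ v)‖ ^ 2 ≤ ‖Ψ‖ * (v ⬝ᵥ (Ψ *ᵥ v)) := by
    have h1 : ‖E (Ψ *ᵥ v)‖ ≤ ‖S‖ * ‖E (S *ᵥ v)‖ := by
      rw [← hSS, ← Matrix.mulVec_mulVec]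
      exact Matrix.l2_opNorm_mulVec S (E (S *ᵥ v))
    have h2' := mul_le_mul h1 h1 (norm_nonneg _) (by positivity)
    calc ‖E (Ψ *ᵥ v)‖ ^ 2 = ‖E (Ψ *ᵥ v)‖ * ‖E (Ψ *ᵥ v)‖ := by ring
      _ ≤ (‖S‖ * ‖E (S *ᵥ v)‖) * (‖S‖ * ‖E (S *ᵥ v)‖) := h2'
      _ = (‖S‖ * ‖S‖) * ‖E (S *ᵥ v)‖ ^ 2 := by ring
      _ = ‖Ψ‖ * (v ⬝ᵥ (Ψ *ᵥ v)) := by rw [hnS, hnSv]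
  -- expand the square of the target norm
  have expand : ‖E v - c • Matrix.toEuclideanCLM (𝕜 := ℝ) Ψ (E v)‖ ^ 2
      = ‖E v‖ ^ 2 - 2 * c * (v ⬝ᵥ (Ψ *ᵥ v)) + c ^ 2 * ‖E (Ψ *ᵥ v)‖ ^ 2 := by
    rw [happ]
    rw [norm_sub_sq_real, real_inner_smul_right, norm_smul, hdot]
    simp [mul_pow]
    ring
  have goal2 : ‖E v - c • Matrix.toEuclideanCLM (𝕜 := ℝ) Ψ (E v)‖ ^ 2 ≤ ‖E v‖ ^ 2 := by
    rw [expand]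
    nlinarith [mul_le_mul_of_nonneg_left hΨv (sq_nonneg c),
      mul_le_mul_of_nonneg_right h2 (mul_nonneg hc hip_nonneg),
      mul_nonneg hc hip_nonneg]
  have hn1 : (0:ℝ) ≤ ‖E v - c • Matrix.toEuclideanCLM (𝕜 := ℝ) Ψ (E v)‖ := norm_nonneg _
  have hn2 : (0:ℝ) ≤ ‖E v‖ := norm_nonneg _
  calc ‖E v - c • Matrix.toEuclideanCLM (𝕜 := ℝ) Ψ (E v)‖
      = Real.sqrt (‖E v - c • Matrix.toEuclideanCLM (𝕜 := ℝ) Ψ (E v)‖ ^ 2) :=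
        (Real.sqrt_sq hn1).symm
    _ ≤ Real.sqrt (‖E v‖ ^ 2) := Real.sqrt_le_sqrt goal2
    _ = ‖E v‖ := Real.sqrt_sq hn2

lemma my_one_le_prod (s : Finset ℕ) (g : ℕ → ℝ) (h : ∀ j, 1 ≤ g j) :
    1 ≤ ∏ j ∈ s, g j := by
  calc (1:ℝ) = ∏ _j ∈ s, (1:ℝ) := by simp
    _ ≤ ∏ j ∈ s, g j := Finset.prod_le_prod (fun _ _ => zero_le_one) (fun j _ => h j)

lemma my_prod_le_prod_subset (s t : Finset ℕ) (hs : s ⊆ t) (g : ℕ → ℝ)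
    (h : ∀ j, 1 ≤ g j) : ∏ j ∈ s, g j ≤ ∏ j ∈ t, g j := by
  rw [← Finset.prod_sdiff hs]
  have h0 : 0 ≤ ∏ j ∈ s, g j := Finset.prod_nonneg fun j _ => zero_le_one.trans (h j)
  exact le_mul_of_one_le_left h0 (my_one_le_prod _ g h)

/-- Let `c` be nonnegative and square-summable and `Ψ t` symmetric positive definite
matrices with `‖Ψ t‖ ≤ ρΨ`, such that `c t * ‖Ψ t‖ < 1` for all `t ≥ Tc`.  Then the
ordered products `Φ(t,k) = ∏_{j=k}^{t} (I - c j • Ψ j)` (factors in decreasing index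
order, with `Φ(t,k) = I` for `t < k`) are uniformly bounded:
`∃ ρΦ > 0, ‖Φ(t,k)‖² ≤ ρΦ` for all `t ≥ k`. -/
theorem matrix_products_uniformly_bounded {m : ℕ}
    (c : ℕ → ℝ) (hc : ∀ t, 0 ≤ c t) (hc2 : Summable fun t => (c t) ^ 2)
    (Ψ : ℕ → Matrix (Fin m) (Fin m) ℝ) (hΨpos : ∀ t, (Ψ t).PosDef)
    (ρΨ : ℝ) (hρΨ : ∀ t, ‖Ψ t‖ ≤ ρΨ)
    (Tc : ℕ) (hTc : ∀ t, Tc ≤ t → c t * ‖Ψ t‖ < 1)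
    (Φ : ℕ → ℕ → Matrix (Fin m) (Fin m) ℝ)
    (hΦ_empty : ∀ t k, t < k → Φ t k = 1)
    (hΦ_base : Φ 0 0 = 1 - c 0 • Ψ 0)
    (hΦ_rec : ∀ t k, k ≤ t + 1 → Φ (t + 1) k = (1 - c (t + 1) • Ψ (t + 1)) * Φ t k) :
    ∃ ρΦ > 0, ∀ k t : ℕ, k ≤ t → ‖Φ t k‖ ^ 2 ≤ ρΦ := by
  classical
  set f : ℕ → ℝ := fun j => ‖(1 : Matrix (Fin m) (Fin m) ℝ) - c j • Ψ j‖ with hf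
  have hf0 : ∀ j, 0 ≤ f j := fun j => norm_nonneg _
  have hfle : ∀ j, Tc ≤ j → f j ≤ 1 := by
    intro j hj
    exact my_key (c j) (hc j) (Ψ j) (hΨpos j).posSemidef
      (le_trans (hTc j hj).le one_le_two)
  set g : ℕ → ℝ := fun j => if j < Tc then max 1 (f j) else 1 with hg
  have hg1 : ∀ j, 1 ≤ g j := by
    intro j; by_cases h : j < Tc <;> simp [hg, h, le_max_left]
  have hfg : ∀ j, f j ≤ g j := by
    intro j; by_cases h : j < Tc
    · simp only [hg, if_pos h]; exact le_max_right _ _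
    · push_neg at h
      simpa only [hg, if_neg (not_lt.mpr h)] using hfle j h
  set M : ℝ := ∏ j ∈ Finset.range Tc, g j with hM
  have hM1 : 1 ≤ M := by
    rw [hM]; exact my_one_le_prod _ g hg1
  refine ⟨M ^ 2, by positivity, ?_⟩
  intro k t hkt
  have claim : ∀ t k : ℕ, k ≤ t → ‖Φ t k‖ ≤ ∏ j ∈ Finset.Icc k t, f j := by
    intro t
    induction t with
    | zero =>
      intro k hk
      have hk0 : k = 0 := Nat.le_zero.mp hk
      subst hk0
      rw [hΦ_base]
      simp [hf]
    | succ t ih =>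
      intro k hk
      rw [hΦ_rec t k hk]
      rcases Nat.lt_or_ge t k with h | h
      · have hk' : k = t + 1 := le_antisymm hk h
        subst hk'
        rw [hΦ_empty t (t + 1) (Nat.lt_succ_self t), mul_one]
        simp [Finset.Icc_self, hf]
      · calc ‖(1 - c (t + 1) • Ψ (t + 1)) * Φ t k‖
            ≤ f (t + 1) * ‖Φ t k‖ := norm_mul_le _ _
          _ ≤ f (t + 1) * ∏ j ∈ Finset.Icc k t, f j :=
              mul_le_mul_of_nonneg_left (ih k h) (hf0 _)
          _ = ∏ j ∈ Finset.Icc k (t + 1), f j := by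
              rw [Finset.prod_Icc_succ_top (Nat.le_succ_of_le h), mul_comm]
  have hprod : ∏ j ∈ Finset.Icc k t, f j ≤ M := by
    calc ∏ j ∈ Finset.Icc k t, f j ≤ ∏ j ∈ Finset.Icc k t, g j :=
          Finset.prod_le_prod (fun j _ => hf0 j) (fun j _ => hfg j)
      _ = ∏ j ∈ (Finset.Icc k t).filter (· < Tc), g j := by
          refine (Finset.prod_filter_of_ne ?_).symm
          intro j _ hj
          by_contra h
          exact hj (by simp [hg, if_neg h])
      _ ≤ M := by
          refine my_prod_le_prod_subset _ _ ?_ g hg1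
          intro j hj
          simp only [Finset.mem_filter] at hj
          exact Finset.mem_range.mpr hj.2
  have hΦle : ‖Φ t k‖ ≤ M := (claim t k hkt).trans hprod
  exact pow_le_pow_left₀ (norm_nonneg _) hΦle 2
end

section
/- Gaussian mechanism privacy bound: let M : D → ℝ^n be a deterministic query with ℓ²-sensitivity Δ = max over adjacent databases of ‖M(D) - M(D')‖. If η has i.i.d. N(0, σ²) components with σ ≥ Δ / (√(Q⁻¹(δ)² + 2ε) - Q⁻¹(δ)), then the mechanism M(D) + η is (ε, δ)-differentially private: for every measurable S ⊆ ℝ^n and all adjacent D, D', P[M(D)+η ∈ S] ≤ e^ε P[M(D')+η ∈ S] + δ. -/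
open MeasureTheory

/-- The standard Gaussian tail function `Q(x) = (1/√(2π)) ∫_x^∞ e^{-u²/2} du`. -/
noncomputable def gaussQ (x : ℝ) : ℝ :=
  (Real.sqrt (2 * Real.pi))⁻¹ * ∫ u in Set.Ioi x, Real.exp (-u ^ 2 / 2)

/-- The i.i.d. `N(0, σ²)` noise distribution on `ℝⁿ`. -/
noncomputable def gaussNoise (n : ℕ) (σ : ℝ) : Measure (EuclideanSpace ℝ (Fin n)) :=
  (Measure.pi fun _ : Fin n => ProbabilityTheory.gaussianReal 0 (σ ^ 2).toNNReal).map
    ⇑(EuclideanSpace.equiv (Fin n) ℝ).symm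

open ProbabilityTheory Real Set
open scoped ENNReal NNReal RealInnerProductSpace

lemma gaussQ_anti {x y : ℝ} (h : x ≤ y) : gaussQ y ≤ gaussQ x := by
  have hint : IntegrableOn (fun u : ℝ => Real.exp (-u ^ 2 / 2)) (Set.Ioi x) := by
    have : (fun u : ℝ => Real.exp (-u ^ 2 / 2)) = fun u => Real.exp (-(1/2) * u ^ 2) := by
      ext u; ring_nf
    rw [this]
    exact (integrable_exp_neg_mul_sq (by norm_num)).integrableOn
  have := setIntegral_mono_set hint
    (Filter.Eventually.of_forall fun u => (Real.exp_pos _).le)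
    (HasSubset.Subset.eventuallyLE (Set.Ioi_subset_Ioi h))
  have h2π : (0:ℝ) ≤ (Real.sqrt (2 * Real.pi))⁻¹ := by positivity
  exact mul_le_mul_of_nonneg_left this h2π

lemma gaussQ_zero : gaussQ 0 = 1 / 2 := by
  have : (fun u : ℝ => Real.exp (-u ^ 2 / 2)) = fun u => Real.exp (-(1/2) * u ^ 2) := by
    ext u; ring_nf
  rw [gaussQ, this, integral_gaussian_Ioi]
  rw [show π / (1/2) = Real.sqrt (2*π) * Real.sqrt (2*π) by
    rw [Real.mul_self_sqrt (by positivity)]; ring]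
  rw [Real.sqrt_mul_self (by positivity)]
  field_simp

lemma lintegral_fin_prod {n : ℕ} (μ : Fin n → Measure ℝ) [∀ i, SigmaFinite (μ i)]
    (f : Fin n → ℝ → ℝ≥0∞) (hf : ∀ i, Measurable (f i)) :
    ∫⁻ x : Fin n → ℝ, ∏ i, f i (x i) ∂Measure.pi μ = ∏ i, ∫⁻ x, f i x ∂μ i := by
  induction n with
  | zero => simp
  | succ n ih =>
    have hmp := (measurePreserving_piFinSuccAbove μ 0).symm
    rw [← hmp.map_eq, lintegral_map (by fun_prop) (MeasurableEquiv.measurable _)]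
    have key : ∀ p : ℝ × (Fin n → ℝ),
        (∏ i, f i ((MeasurableEquiv.piFinSuccAbove (fun _ => ℝ) 0).symm p i)) =
          f 0 p.1 * ∏ i : Fin n, f i.succ (p.2 i) := by
      intro p
      rw [Fin.prod_univ_succ]
      simp [MeasurableEquiv.piFinSuccAbove_symm_apply, Fin.succAbove]
    simp_rw [key]
    have hg : Measurable fun y : Fin n → ℝ => ∏ i : Fin n, f i.succ (y i) := by fun_prop
    rw [lintegral_prod_mul (hf 0).aemeasurable hg.aemeasurable]
    simp_rw [Fin.succAbove_zero]
    rw [ih (fun i => μ i.succ) (fun i => f i.succ) (fun i => hf i.succ), Fin.prod_univ_succ]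

lemma map_equiv_withDensity {α β : Type*} [MeasurableSpace α] [MeasurableSpace β]
    (e : α ≃ᵐ β) (μ : Measure α) (g : α → ℝ≥0∞) (hg : Measurable g) :
    (μ.withDensity g).map e = (μ.map e).withDensity (g ∘ e.symm) := by
  ext s hs
  rw [Measure.map_apply e.measurable hs, withDensity_apply _ (e.measurable hs),
    withDensity_apply _ hs, Measure.restrict_map e.measurable hs,
    lintegral_map (hg.comp e.symm.measurable) e.measurable]
  simp [Function.comp]

lemma pi_gaussian_withDensity {n : ℕ} {σ : ℝ} (hσ : 0 < σ) :
    (Measure.pi fun _ : Fin n => gaussianReal 0 (σ ^ 2).toNNReal) =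
      (volume : Measure (Fin n → ℝ)).withDensity
        (fun x => ∏ i, gaussianPDF 0 (σ ^ 2).toNNReal (x i)) := by
  have hv : (σ ^ 2).toNNReal ≠ 0 := by
    simp only [ne_eq, Real.toNNReal_eq_zero, not_le]
    positivity
  refine Measure.pi_eq fun A hA => ?_
  rw [withDensity_apply _ (MeasurableSet.univ_pi hA)]
  have : ∀ x : Fin n → ℝ, (Set.univ.pi A).indicator
      (fun x => ∏ i, gaussianPDF 0 (σ ^ 2).toNNReal (x i)) x
      = ∏ i, (A i).indicator (gaussianPDF 0 (σ ^ 2).toNNReal) (x i) := by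
    intro x
    by_cases hx : x ∈ Set.univ.pi A
    · rw [Set.indicator_of_mem hx]
      exact Finset.prod_congr rfl fun i _ =>
        (Set.indicator_of_mem (hx i (Set.mem_univ i)) _).symm
    · rw [Set.indicator_of_notMem hx]
      rw [Set.mem_univ_pi] at hx
      push_neg at hx
      obtain ⟨i, hi⟩ := hx
      exact (Finset.prod_eq_zero (Finset.mem_univ i)
        (by rw [Set.indicator_of_notMem hi])).symm
  rw [← lintegral_indicator (MeasurableSet.univ_pi hA)]
  simp_rw [this]
  rw [volume_pi]
  rw [lintegral_fin_prod _ _ (fun i => (measurable_gaussianPDF _ _).indicator (hA i))]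
  exact Finset.prod_congr rfl fun i _ => by
    rw [lintegral_indicator (hA i), ← gaussianReal_apply _ hv]

lemma gaussianReal_Ioi {σ : ℝ} (hσ : 0 < σ) (r : ℝ) :
    gaussianReal 0 (σ ^ 2).toNNReal (Ioi r) = ENNReal.ofReal (gaussQ (r / σ)) := by
  have hv : (σ ^ 2).toNNReal ≠ 0 := by
    simp only [ne_eq, Real.toNNReal_eq_zero, not_le]; positivity
  rw [gaussianReal_apply_eq_integral _ hv _]
  congr 1
  have hpdf : ∀ x : ℝ, gaussianPDFReal 0 (σ ^ 2).toNNReal (σ * x)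
      = (Real.sqrt (2 * π))⁻¹ * σ⁻¹ * Real.exp (-x ^ 2 / 2) := by
    intro x
    unfold gaussianPDFReal
    have hc : ((σ ^ 2).toNNReal : ℝ) = σ ^ 2 := Real.coe_toNNReal _ (by positivity)
    rw [hc, sub_zero, show 2 * π * σ ^ 2 = (2 * π) * σ ^ 2 by ring,
      Real.sqrt_mul (by positivity), Real.sqrt_sq hσ.le, mul_inv]
    congr 2
    field_simp
  have h1 := integral_comp_mul_left_Ioi (gaussianPDFReal 0 (σ ^ 2).toNNReal) (r / σ) hσ
  rw [mul_div_cancel₀ _ hσ.ne'] at h1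
  have h2 : ∫ x in Ioi r, gaussianPDFReal 0 (σ ^ 2).toNNReal x
      = σ * ∫ x in Ioi (r / σ), gaussianPDFReal 0 (σ ^ 2).toNNReal (σ * x) := by
    rw [h1, smul_eq_mul, ← mul_assoc, mul_inv_cancel₀ hσ.ne', one_mul]
  rw [h2]
  simp_rw [hpdf]
  rw [integral_const_mul, gaussQ]
  rw [← mul_assoc]
  congr 1
  rw [← mul_assoc, mul_comm σ, mul_assoc, mul_inv_cancel₀ hσ.ne', mul_one]

/-- The density of `gaussNoise` with respect to volume. -/
noncomputable def gDens (n : ℕ) (σ : ℝ) (x : EuclideanSpace ℝ (Fin n)) : ℝ≥0∞ :=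
  ENNReal.ofReal ((Real.sqrt (2 * π * σ ^ 2))⁻¹ ^ n * Real.exp (-‖x‖ ^ 2 / (2 * σ ^ 2)))

lemma gDens_eq_prod {n : ℕ} {σ : ℝ} (hσ : 0 < σ) (x : EuclideanSpace ℝ (Fin n)) :
    gDens n σ x = ∏ i, gaussianPDF 0 (σ ^ 2).toNNReal (x i) := by
  unfold gaussianPDF gDens
  rw [← ENNReal.ofReal_prod_of_nonneg (fun i _ => gaussianPDFReal_nonneg _ _ _)]
  congr 1
  unfold gaussianPDFReal
  rw [Finset.prod_mul_distrib, Finset.prod_const]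
  have hc : ((σ ^ 2).toNNReal : ℝ) = σ ^ 2 := Real.coe_toNNReal _ (by positivity)
  rw [hc, ← Real.exp_sum, Finset.card_univ, Fintype.card_fin]
  congr 1
  rw [EuclideanSpace.norm_eq, Real.sq_sqrt (by positivity)]
  simp only [sub_zero, Real.norm_eq_abs, sq_abs, neg_div, Finset.sum_div, Finset.sum_neg_distrib]

lemma gaussNoise_withDensity {n : ℕ} {σ : ℝ} (hσ : 0 < σ) :
    gaussNoise n σ = (volume : Measure (EuclideanSpace ℝ (Fin n))).withDensity (gDens n σ) := by
  have hcoe : (⇑(EuclideanSpace.equiv (Fin n) ℝ).symm : (Fin n → ℝ) → EuclideanSpace ℝ (Fin n))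
      = ⇑(MeasurableEquiv.toLp 2 (Fin n → ℝ)) := rfl
  have hgm : Measurable (fun x : Fin n → ℝ => ∏ i, gaussianPDF 0 (σ ^ 2).toNNReal (x i)) := by
    exact Finset.measurable_prod _ fun i _ =>
      (measurable_gaussianPDF _ _).comp (measurable_pi_apply i)
  rw [gaussNoise, hcoe, pi_gaussian_withDensity hσ,
    map_equiv_withDensity _ _ _ hgm,
    (show MeasurePreserving (MeasurableEquiv.toLp 2 (Fin n → ℝ)) volume volume from MeasurePreserving.symm _ (EuclideanSpace.volume_preserving_symm_measurableEquiv_toLp (Fin n))).map_eq]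
  congr 1
  ext x
  rw [Function.comp_apply, MeasurableEquiv.coe_toLp_symm, ← gDens_eq_prod hσ]

lemma gaussNoise_map_isometry {n : ℕ} {σ : ℝ} (hσ : 0 < σ)
    (f : EuclideanSpace ℝ (Fin n) ≃ₗᵢ[ℝ] EuclideanSpace ℝ (Fin n)) :
    (gaussNoise n σ).map f = gaussNoise n σ := by
  rw [gaussNoise_withDensity hσ]
  have hcoe : (⇑f : EuclideanSpace ℝ (Fin n) → EuclideanSpace ℝ (Fin n))
      = ⇑f.toMeasurableEquiv := rfl
  have hgm : Measurable (gDens n σ) := by unfold gDens; fun_prop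
  rw [hcoe, map_equiv_withDensity f.toMeasurableEquiv _ _ hgm, ← hcoe, f.measurePreserving.map_eq]
  congr 1
  ext x
  simp only [Function.comp_apply, gDens]
  congr 3
  rw [← LinearIsometryEquiv.toMeasurableEquiv_symm, LinearIsometryEquiv.coe_toMeasurableEquiv,
    LinearIsometryEquiv.norm_map]

lemma gDens_measurable (n : ℕ) (σ : ℝ) : Measurable (gDens n σ) := by
  unfold gDens; fun_prop

lemma gaussNoise_shift {n : ℕ} {σ : ℝ} (hσ : 0 < σ) (a : EuclideanSpace ℝ (Fin n))
    (S : Set (EuclideanSpace ℝ (Fin n))) (hS : MeasurableSet S) :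
    gaussNoise n σ {x | a + x ∈ S} = ∫⁻ y in S, gDens n σ (y - a) ∂volume := by
  have hpre : MeasurableSet {x : EuclideanSpace ℝ (Fin n) | a + x ∈ S} :=
    (measurable_const_add a) hS
  rw [gaussNoise_withDensity hσ, withDensity_apply _ hpre]
  have hmp : MeasurePreserving (fun x : EuclideanSpace ℝ (Fin n) => a + x)
      (volume.restrict {x | a + x ∈ S}) (volume.restrict S) :=
    (measurePreserving_add_left volume a).restrict_preimage hS
  have hg : Measurable fun y : EuclideanSpace ℝ (Fin n) => gDens n σ (y - a) :=
    (gDens_measurable n σ).comp (measurable_sub_const a)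
  rw [← hmp.lintegral_comp hg]
  simp only [add_sub_cancel_left]

lemma gaussNoise_halfspace {n : ℕ} {σ : ℝ} (hσ : 0 < σ) (v : EuclideanSpace ℝ (Fin n))
    (hv : v ≠ 0) (t : ℝ) :
    gaussNoise n σ {x | t < ⟪v, x⟫} = ENNReal.ofReal (gaussQ (t / (‖v‖ * σ))) := by
  have hn : 0 < n := by
    rcases Nat.eq_zero_or_pos n with h | h
    · exfalso; apply hv; subst h; exact Subsingleton.elim v 0
    · exact h
  have hvn : (0:ℝ) < ‖v‖ := norm_pos_iff.mpr hv
  set i₀ : Fin n := ⟨0, hn⟩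
  set u : EuclideanSpace ℝ (Fin n) := ‖v‖⁻¹ • v with hu_def
  have hu : ‖u‖ = 1 := by
    rw [hu_def, norm_smul, norm_inv, norm_norm, inv_mul_cancel₀ hvn.ne']
  have hON : Orthonormal ℝ (({i₀} : Set (Fin n)).restrict fun _ => u) := by
    rw [orthonormal_iff_ite]
    rintro ⟨i, hi⟩ ⟨j, hj⟩
    simp only [Set.mem_singleton_iff] at hi hj
    subst hi; subst hj
    rw [if_pos rfl, real_inner_self_eq_norm_mul_norm]
    show ‖u‖ * ‖u‖ = 1
    rw [hu, one_mul]
  obtain ⟨b, hb⟩ := hON.exists_orthonormalBasis_extension_of_card_eq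
    (by simp [finrank_euclideanSpace_fin]) (v := fun _ => u) (s := {i₀})
  have hbi : b i₀ = u := hb i₀ rfl
  have hrepr : ∀ x, b.repr x i₀ = ‖v‖⁻¹ * ⟪v, x⟫ := by
    intro x
    rw [b.repr_apply_apply, hbi, hu_def, real_inner_smul_left]
  have hsets : {x : EuclideanSpace ℝ (Fin n) | t < ⟪v, x⟫}
      = ⇑b.repr ⁻¹' {y : EuclideanSpace ℝ (Fin n) | t / ‖v‖ < y i₀} := by
    ext x
    simp only [Set.mem_setOf_eq, Set.mem_preimage, hrepr, inv_mul_eq_div]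
    rw [div_lt_div_iff_of_pos_right hvn]
  have hCmeas : MeasurableSet {y : EuclideanSpace ℝ (Fin n) | t / ‖v‖ < y i₀} := by
    exact measurableSet_lt measurable_const
      ((measurable_pi_apply i₀).comp (MeasurableEquiv.toLp 2 (Fin n → ℝ)).symm.measurable)
  rw [hsets, ← Measure.map_apply b.repr.continuous.measurable hCmeas,
    gaussNoise_map_isometry hσ b.repr]
  -- now compute the cylinder probability
  rw [gaussNoise, Measure.map_apply (by exact (MeasurableEquiv.toLp 2 (Fin n → ℝ)).measurable) hCmeas]
  have hpre : (⇑(EuclideanSpace.equiv (Fin n) ℝ).symm) ⁻¹'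
        {y : EuclideanSpace ℝ (Fin n) | t / ‖v‖ < y i₀}
      = Set.univ.pi fun i => if i = i₀ then Ioi (t / ‖v‖) else univ := by
    ext x
    simp only [Set.mem_preimage, Set.mem_setOf_eq, Set.mem_univ_pi]
    constructor
    · intro hx i
      by_cases hi : i = i₀
      · subst hi; simp only [if_pos rfl, Set.mem_Ioi]; exact hx
      · simp [hi]
    · intro hx
      have := hx i₀
      simpa using this
  rw [hpre, Measure.pi_pi]
  rw [Finset.prod_eq_single i₀ (fun i _ hi => by simp [hi, measure_univ]) (by simp)]
  rw [show (if (i₀ = i₀) then Ioi (t / ‖v‖) else (univ : Set ℝ)) = Ioi (t / ‖v‖) from if_pos rfl,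
    gaussianReal_Ioi hσ, div_div]

/-- Gaussian mechanism (Lemma 3): if `M` has `ℓ²`-sensitivity at most `Δ` over
adjacent databases and `σ ≥ Δ / (√(Q⁻¹(δ)² + 2ε) - Q⁻¹(δ))`, then the mechanism
`M(D) + η` with `η ~ N(0, σ² Iₙ)` is `(ε, δ)`-differentially private. -/
theorem gaussian_mechanism_dp {D : Type*} (Adj : D → D → Prop) (hAdj : Symmetric Adj)
    {n : ℕ} (M : D → EuclideanSpace ℝ (Fin n)) (Δ : ℝ)
    (hΔ : ∀ d d' : D, Adj d d' → ‖M d - M d'‖ ≤ Δ)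
    (ε δ : ℝ) (hε : 0 < ε) (hδ0 : 0 < δ) (hδ : δ < 1 / 2)
    (q : ℝ) (hq : gaussQ q = δ)
    (σ : ℝ) (hσpos : 0 < σ)
    (hσ : Δ / (Real.sqrt (q ^ 2 + 2 * ε) - q) ≤ σ) :
    ∀ S : Set (EuclideanSpace ℝ (Fin n)), MeasurableSet S →
      ∀ d d' : D, Adj d d' →
        gaussNoise n σ {x | M d + x ∈ S} ≤
          ENNReal.ofReal (Real.exp ε) * gaussNoise n σ {x | M d' + x ∈ S} +
            ENNReal.ofReal δ := by
  intro S hS d d' hadj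
  have hq0 : 0 < q := by
    by_contra h
    push_neg at h
    have h2 := gaussQ_anti h
    rw [gaussQ_zero, hq] at h2
    linarith
  set a := M d with ha
  set b := M d' with hb
  set v : EuclideanSpace ℝ (Fin n) := a - b with hvdef
  have hΔv : ‖v‖ ≤ Δ := hΔ d d' hadj
  have hΔ0 : (0:ℝ) ≤ Δ := le_trans (norm_nonneg _) hΔv
  set r₀ : ℝ := Real.sqrt (q ^ 2 + 2 * ε) - q with hr₀def
  have hsq : Real.sqrt (q ^ 2 + 2 * ε) ^ 2 = q ^ 2 + 2 * ε :=
    Real.sq_sqrt (by positivity)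
  have hr₀pos : 0 < r₀ := by
    have h1 : q < Real.sqrt (q ^ 2 + 2 * ε) := by
      nlinarith [Real.sqrt_nonneg (q ^ 2 + 2 * ε)]
    simp only [hr₀def, sub_pos, h1]
  have hΔσ : Δ ≤ σ * r₀ := by
    rw [div_le_iff₀ hr₀pos] at hσ
    linarith
  by_cases hv0 : v = 0
  · have hab : a = b := sub_eq_zero.mp hv0
    rw [hab]
    calc gaussNoise n σ {x | b + x ∈ S}
        = 1 * gaussNoise n σ {x | b + x ∈ S} := (one_mul _).symm
      _ ≤ ENNReal.ofReal (Real.exp ε) * gaussNoise n σ {x | b + x ∈ S} :=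
          mul_le_mul_left (ENNReal.one_le_ofReal.mpr (Real.one_le_exp hε.le)) _
      _ ≤ _ + ENNReal.ofReal δ := le_self_add
  · have hc : (0:ℝ) < ‖v‖ := norm_pos_iff.mpr hv0
    set c : ℝ := ‖v‖ with hcdef
    set t : ℝ := ε * σ ^ 2 - c ^ 2 / 2 with htdef
    have hr : (r₀ + q) ^ 2 = q ^ 2 + 2 * ε := by
      rw [hr₀def, sub_add_cancel]; exact hsq
    have hkey : q ≤ t / (c * σ) := by
      rw [le_div_iff₀ (by positivity), htdef]
      have hcσ : c ≤ σ * r₀ := le_trans hΔv hΔσ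
      nlinarith [mul_nonneg (sub_nonneg.mpr hcσ) (by positivity : (0:ℝ) ≤ σ * r₀ + c),
        mul_nonneg (sub_nonneg.mpr hcσ) (by positivity : (0:ℝ) ≤ q * σ), hr]
    set G : Set (EuclideanSpace ℝ (Fin n)) := {y | ⟪v, y - a⟫ ≤ t} with hGdef
    have hGmeas : MeasurableSet G := by
      have : Continuous fun y : EuclideanSpace ℝ (Fin n) => ⟪v, y - a⟫ :=
        continuous_const.inner (continuous_id.sub continuous_const)
      exact measurableSet_le this.measurable measurable_const
    have hfb : Measurable fun y : EuclideanSpace ℝ (Fin n) => gDens n σ (y - b) :=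
      (gDens_measurable n σ).comp (measurable_sub_const b)
    -- pointwise bound on the good region
    have hpt : ∀ y ∈ G, gDens n σ (y - a) ≤ ENNReal.ofReal (Real.exp ε) * gDens n σ (y - b) := by
      intro y hy
      have hyG : ⟪v, y - a⟫ ≤ t := hy
      unfold gDens
      rw [← ENNReal.ofReal_mul (by positivity)]
      apply ENNReal.ofReal_le_ofReal
      have hnorm : ‖y - b‖ ^ 2 = ‖y - a‖ ^ 2 + 2 * ⟪v, y - a⟫ + c ^ 2 := by
        have hyb : y - b = (y - a) + v := by rw [hvdef]; abel
        rw [hyb, norm_add_sq_real, hcdef, real_inner_comm]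
      have hexp : Real.exp (-‖y - a‖ ^ 2 / (2 * σ ^ 2))
          ≤ Real.exp ε * Real.exp (-‖y - b‖ ^ 2 / (2 * σ ^ 2)) := by
        rw [← Real.exp_add]
        apply Real.exp_le_exp.mpr
        have h2σ : (0:ℝ) < 2 * σ ^ 2 := by positivity
        have hX : (2 * ⟪v, y - a⟫ + c ^ 2) / (2 * σ ^ 2) ≤ ε := by
          rw [div_le_iff₀ h2σ]
          rw [htdef] at hyG
          nlinarith [hyG]
        have expand : ε + -(‖y - a‖ ^ 2 + 2 * ⟪v, y - a⟫ + c ^ 2) / (2 * σ ^ 2)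
            = ε - (2 * ⟪v, y - a⟫ + c ^ 2) / (2 * σ ^ 2) + -‖y - a‖ ^ 2 / (2 * σ ^ 2) := by
          ring
        rw [hnorm, expand]
        linarith
      calc (Real.sqrt (2 * π * σ ^ 2))⁻¹ ^ n * Real.exp (-‖y - a‖ ^ 2 / (2 * σ ^ 2))
          ≤ (Real.sqrt (2 * π * σ ^ 2))⁻¹ ^ n
            * (Real.exp ε * Real.exp (-‖y - b‖ ^ 2 / (2 * σ ^ 2))) := by
            apply mul_le_mul_of_nonneg_left hexp (by positivity)
        _ = Real.exp ε * ((Real.sqrt (2 * π * σ ^ 2))⁻¹ ^ n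
            * Real.exp (-‖y - b‖ ^ 2 / (2 * σ ^ 2))) := by ring
    -- split the integral
    rw [gaussNoise_shift hσpos a S hS, gaussNoise_shift hσpos b S hS,
      ← lintegral_inter_add_diff (fun y => gDens n σ (y - a)) S hGmeas]
    have hterm1 : ∫⁻ y in S ∩ G, gDens n σ (y - a) ∂volume
        ≤ ENNReal.ofReal (Real.exp ε) * ∫⁻ y in S, gDens n σ (y - b) ∂volume := by
      calc ∫⁻ y in S ∩ G, gDens n σ (y - a) ∂volume
          ≤ ∫⁻ y in S ∩ G, ENNReal.ofReal (Real.exp ε) * gDens n σ (y - b) ∂volume :=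
            setLIntegral_mono (hfb.const_mul _) fun y hy => hpt y hy.2
        _ = ENNReal.ofReal (Real.exp ε) * ∫⁻ y in S ∩ G, gDens n σ (y - b) ∂volume :=
            lintegral_const_mul _ hfb
        _ ≤ ENNReal.ofReal (Real.exp ε) * ∫⁻ y in S, gDens n σ (y - b) ∂volume :=
            mul_le_mul_right (lintegral_mono_set inter_subset_left) _
    have hterm2 : ∫⁻ y in S \ G, gDens n σ (y - a) ∂volume ≤ ENNReal.ofReal δ := by
      calc ∫⁻ y in S \ G, gDens n σ (y - a) ∂volume
          ≤ ∫⁻ y in Gᶜ, gDens n σ (y - a) ∂volume :=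
            lintegral_mono_set fun y hy => hy.2
        _ = gaussNoise n σ {x | a + x ∈ Gᶜ} :=
            (gaussNoise_shift hσpos a Gᶜ hGmeas.compl).symm
        _ = gaussNoise n σ {x | t < ⟪v, x⟫} := by
            congr 1
            ext x
            simp only [Set.mem_setOf_eq, Set.mem_compl_iff, hGdef, add_sub_cancel_left, not_le]
        _ = ENNReal.ofReal (gaussQ (t / (c * σ))) := gaussNoise_halfspace hσpos v hv0 t
        _ ≤ ENNReal.ofReal δ := by
            rw [← hq]
            exact ENNReal.ofReal_le_ofReal (gaussQ_anti hkey)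
    calc (∫⁻ y in S ∩ G, gDens n σ (y - a) ∂volume)
          + ∫⁻ y in S \ G, gDens n σ (y - a) ∂volume
        ≤ (ENNReal.ofReal (Real.exp ε) * ∫⁻ y in S, gDens n σ (y - b) ∂volume)
          + ENNReal.ofReal δ := add_le_add hterm1 hterm2
end

section
/- Sequential composition: if mechanism M_t is (ε_t, δ_t)-differentially private for each t ∈ ℕ (adaptively composed), and ∑_t ε_t < ∞ and ∑_t δ_t < ∞, then the infinite composed mechanism is (∑_t ε_t, ∑_t δ_t)-differentially private. -/
open MeasureTheory

/-- Adaptive sequential composition of mechanisms: at step `t`, mechanism `M t`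
sees the database and the outputs of steps `0, …, t-1` and outputs an element of
`O`; the composed mechanism over horizon `T` is the resulting distribution of the
output trajectory. -/
noncomputable def composedMech {D O : Type*} [MeasurableSpace O]
    (M : (t : ℕ) → D → (Fin t → O) → Measure O) : (T : ℕ) → D → Measure (Fin T → O)
  | 0, _ => Measure.dirac (fun i => i.elim0)
  | T + 1, d => (composedMech M T d).bind fun h => (M T d h).map (Fin.snoc h)

open ENNReal Real Set ProbabilityTheory

section Aux

variable {D O : Type*} [MeasurableSpace O]

lemma measurable_snoc_pair (T : ℕ) :
    Measurable fun p : (Fin T → O) × O => (Fin.snoc p.1 p.2 : Fin (T + 1) → O) := by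
  apply measurable_pi_lambda
  intro j
  induction j using Fin.lastCases with
  | last => simpa [Fin.snoc_last] using measurable_snd
  | cast i => simpa [Fin.snoc_castSucc, Function.comp_def] using (measurable_pi_apply i).comp measurable_fst

lemma measurable_snoc_left {O : Type*} [MeasurableSpace O] {T : ℕ} (h : Fin T → O) :
    Measurable (fun o : O => (Fin.snoc h o : Fin (T + 1) → O)) := by
  have := (measurable_snoc_pair (O := O) T).comp (measurable_prodMk_left (x := h))
  simpa [Function.comp_def] using this

/-- Pointwise `(ε,δ)`-inequality on sets lifts to `[0,1]`-valued functions,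
via the layer cake formula. -/
lemma dp_lift {α : Type*} [MeasurableSpace α] (μ ν : Measure α)
    [IsProbabilityMeasure μ] [IsProbabilityMeasure ν] {ε δ : ℝ} (hδ : 0 ≤ δ)
    (hset : ∀ S : Set α, MeasurableSet S →
      μ S ≤ ENNReal.ofReal (Real.exp ε) * ν S + ENNReal.ofReal δ)
    {g : α → ℝ≥0∞} (hg : Measurable g) (hg1 : ∀ a, g a ≤ 1) :
    ∫⁻ a, g a ∂μ ≤ (ENNReal.ofReal (Real.exp ε) * ∫⁻ a, g a ∂ν) + ENNReal.ofReal δ := by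
  set f : α → ℝ := fun a => (g a).toReal with hf
  have hgne : ∀ a, g a ≠ ∞ := fun a => ((hg1 a).trans_lt ENNReal.one_lt_top).ne
  have hof : ∀ a, ENNReal.ofReal (f a) = g a := fun a => ENNReal.ofReal_toReal (hgne a)
  have hf1 : ∀ a, f a ≤ 1 := by
    intro a
    simpa using ENNReal.toReal_mono ENNReal.one_ne_top (hg1 a)
  have hfm : Measurable f := ENNReal.measurable_toReal.comp hg
  have hlev : ∀ t : ℝ, MeasurableSet {a | t < f a} := fun t => measurableSet_lt measurable_const hfm
  have hlayer : ∀ m : Measure α, ∫⁻ a, g a ∂m = ∫⁻ t in Ioi (0 : ℝ), m {a | t < f a} := by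
    intro m
    rw [← lintegral_eq_lintegral_meas_lt m (ae_of_all _ fun a => ENNReal.toReal_nonneg)
      hfm.aemeasurable]
    exact lintegral_congr fun a => (hof a).symm
  have hνmono : Measurable fun t : ℝ => ν {a | t < f a} := by
    have : Antitone fun t : ℝ => ν {a | t < f a} := by
      intro s t hst
      exact measure_mono fun a ha => lt_of_le_of_lt hst ha
    exact this.measurable
  have hptwise : ∀ t ∈ Ioi (0 : ℝ),
      μ {a | t < f a} ≤ ENNReal.ofReal (Real.exp ε) * ν {a | t < f a} +
        (Ioc (0:ℝ) 1).indicator (fun _ => ENNReal.ofReal δ) t := by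
    intro t ht
    by_cases h1 : t ≤ 1
    · have hmem : t ∈ Ioc (0:ℝ) 1 := ⟨ht, h1⟩
      rw [Set.indicator_of_mem hmem]
      exact hset _ (hlev t)
    · have hempty : {a | t < f a} = ∅ := by
        ext a
        simp only [mem_setOf_eq, mem_empty_iff_false, iff_false, not_lt]
        exact (hf1 a).trans (le_of_not_ge h1)
      rw [hempty]
      simp
  calc ∫⁻ a, g a ∂μ = ∫⁻ t in Ioi (0 : ℝ), μ {a | t < f a} := hlayer μ
    _ ≤ ∫⁻ t in Ioi (0 : ℝ), (ENNReal.ofReal (Real.exp ε) * ν {a | t < f a} +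
        (Ioc (0:ℝ) 1).indicator (fun _ => ENNReal.ofReal δ) t) :=
      setLIntegral_mono ((hνmono.const_mul _).add
        (measurable_const.indicator measurableSet_Ioc)) hptwise
    _ = (ENNReal.ofReal (Real.exp ε) * ∫⁻ t in Ioi (0 : ℝ), ν {a | t < f a}) +
        ∫⁻ t in Ioi (0 : ℝ), (Ioc (0:ℝ) 1).indicator (fun _ => ENNReal.ofReal δ) t := by
      rw [lintegral_add_right _ (measurable_const.indicator measurableSet_Ioc),
        lintegral_const_mul _ hνmono]
    _ = (ENNReal.ofReal (Real.exp ε) * ∫⁻ a, g a ∂ν) + ENNReal.ofReal δ := by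
      rw [← hlayer ν]
      congr 1
      rw [lintegral_indicator measurableSet_Ioc, lintegral_const, Measure.restrict_restrict measurableSet_Ioc,
        Set.inter_eq_self_of_subset_left Set.Ioc_subset_Ioi_self,
        Measure.restrict_apply_univ, Real.volume_Ioc]
      simp

/-- The one-step transition, as a measurable family of measures. -/
lemma measurable_step (M : (t : ℕ) → D → (Fin t → O) → Measure O)
    (hprob : ∀ t d h, IsProbabilityMeasure (M t d h))
    (hker : ∀ t d, ∀ S : Set O, MeasurableSet S → Measurable fun h => M t d h S)
    (T : ℕ) (d : D) :
    Measurable fun h : Fin T → O =>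
      ((M T d h).map (Fin.snoc h) : Measure (Fin (T + 1) → O)) := by
  refine Measure.measurable_of_measurable_coe _ fun s hs => ?_
  have heq : ∀ h : Fin T → O, ((M T d h).map (Fin.snoc h) : Measure (Fin (T + 1) → O)) s
      = M T d h ((fun o : O => (Fin.snoc h o : Fin (T + 1) → O)) ⁻¹' s) :=
    fun h => Measure.map_apply (measurable_snoc_left h) hs
  simp_rw [heq]
  let κ : Kernel (Fin T → O) O := ⟨fun h => M T d h, Measure.measurable_measure.mpr (hker T d)⟩
  haveI : IsMarkovKernel κ := ⟨fun h => hprob T d h⟩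
  have ht : MeasurableSet ((fun p : (Fin T → O) × O => (Fin.snoc p.1 p.2 : Fin (T+1) → O)) ⁻¹' s) :=
    (measurable_snoc_pair T) hs
  exact Kernel.measurable_kernel_prodMk_left (κ := κ) ht

lemma composedMech_prob (M : (t : ℕ) → D → (Fin t → O) → Measure O)
    (hprob : ∀ t d h, IsProbabilityMeasure (M t d h))
    (hker : ∀ t d, ∀ S : Set O, MeasurableSet S → Measurable fun h => M t d h S)
    (T : ℕ) (d : D) :
    IsProbabilityMeasure (composedMech M T d) := by
  induction T with
  | zero =>
    rw [composedMech]
    infer_instance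
  | succ T ih =>
    constructor
    rw [composedMech, Measure.bind_apply MeasurableSet.univ (measurable_step M hprob hker T d).aemeasurable]
    have : ∀ h : Fin T → O,
        ((M T d h).map (Fin.snoc h) : Measure (Fin (T + 1) → O)) Set.univ = 1 := by
      intro h
      haveI := hprob T d h
      haveI : IsProbabilityMeasure ((M T d h).map (Fin.snoc h) : Measure (Fin (T + 1) → O)) :=
        Measure.isProbabilityMeasure_map (measurable_snoc_left h).aemeasurable
      exact measure_univ
    simp_rw [this]
    simpa using ih.measure_univ

end Aux

/-- Adaptive sequential composition theorem: if each adaptively chosen mechanism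
`M t` is `(ε t, δ t)`-differentially private (for every observed history), then the
composition over horizon `T` is `(∑_{t<T} ε t, ∑_{t<T} δ t)`-differentially
private. -/
theorem adaptive_sequential_composition {D O : Type*} [MeasurableSpace O]
    (Adj : D → D → Prop) (hAdj : Symmetric Adj)
    (M : (t : ℕ) → D → (Fin t → O) → Measure O)
    (hprob : ∀ t d h, IsProbabilityMeasure (M t d h))
    (hker : ∀ t d, ∀ S : Set O, MeasurableSet S → Measurable fun h => M t d h S)
    (ε δ : ℕ → ℝ) (hε : ∀ t, 0 ≤ ε t) (hδ : ∀ t, 0 ≤ δ t)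
    (hDP : ∀ t (h : Fin t → O) (d d' : D), Adj d d' →
      ∀ S : Set O, MeasurableSet S →
        M t d h S ≤ ENNReal.ofReal (Real.exp (ε t)) * M t d' h S +
          ENNReal.ofReal (δ t))
    (T : ℕ) :
    ∀ d d' : D, Adj d d' → ∀ S : Set (Fin T → O), MeasurableSet S →
      composedMech M T d S ≤
        ENNReal.ofReal (Real.exp (∑ t ∈ Finset.range T, ε t)) *
            composedMech M T d' S +
          ENNReal.ofReal (∑ t ∈ Finset.range T, δ t) := by
  -- Strengthen to [0,1]-valued functions and induct on `T`.
  suffices hmain : ∀ d d' : D, Adj d d' → ∀ g : (Fin T → O) → ENNReal, Measurable g →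
      (∀ x, g x ≤ 1) →
      ∫⁻ x, g x ∂(composedMech M T d) ≤
        (ENNReal.ofReal (Real.exp (∑ t ∈ Finset.range T, ε t)) *
            ∫⁻ x, g x ∂(composedMech M T d')) +
          ENNReal.ofReal (∑ t ∈ Finset.range T, δ t) by
    intro d d' hdd' S hS
    have := hmain d d' hdd' (S.indicator 1) (measurable_const.indicator hS)
      (fun x => Set.indicator_le_self' (by simp) x |>.trans (by simp))
    simpa [lintegral_indicator_one hS] using this
  clear hAdj
  induction T with
  | zero =>
    intro d d' _ g hg _
    simp [composedMech, lintegral_dirac' _ hg]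
  | succ T IH =>
    intro d d' hdd' g hg hg1
    haveI := composedMech_prob M hprob hker T d
    haveI := composedMech_prob M hprob hker T d'
    -- the inner integral
    set G : D → (Fin T → O) → ENNReal :=
      fun dd h => ∫⁻ o, g (Fin.snoc h o) ∂(M T dd h) with hGdef
    have hGm : ∀ dd, Measurable (G dd) := by
      intro dd
      let κ : Kernel (Fin T → O) O := ⟨fun h => M T dd h, Measure.measurable_measure.mpr (hker T dd)⟩
      haveI : IsMarkovKernel κ := ⟨fun h => hprob T dd h⟩
      exact Measurable.lintegral_kernel_prod_right (κ := κ)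
        (hg.comp (measurable_snoc_pair T))
    have hG1 : ∀ dd h, G dd h ≤ 1 := by
      intro dd h
      haveI := hprob T dd h
      calc G dd h ≤ ∫⁻ _, 1 ∂(M T dd h) := lintegral_mono fun o => hg1 _
        _ = 1 := by simp
    have hGdp : ∀ h, G d h ≤ ENNReal.ofReal (Real.exp (ε T)) * G d' h + ENNReal.ofReal (δ T) := by
      intro h
      haveI := hprob T d h
      haveI := hprob T d' h
      exact dp_lift (M T d h) (M T d' h) (hδ T) (fun S hS => hDP T h d d' hdd' S hS)
        (hg.comp (measurable_snoc_left h)) (fun o => hg1 _)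
    -- unfold both sides
    have hunfold : ∀ dd : D, ∫⁻ x, g x ∂(composedMech M (T+1) dd) =
        ∫⁻ h, G dd h ∂(composedMech M T dd) := by
      intro dd
      rw [show composedMech M (T+1) dd =
        (composedMech M T dd).bind fun h => (M T dd h).map (Fin.snoc h) from rfl,
        Measure.lintegral_bind (measurable_step M hprob hker T dd).aemeasurable hg.aemeasurable]
      exact lintegral_congr fun h => lintegral_map hg (measurable_snoc_left h)
    rw [hunfold d, hunfold d']
    -- truncated function for the induction hypothesis
    set g₂ : (Fin T → O) → ENNReal :=
      fun h => min 1 (ENNReal.ofReal (Real.exp (ε T)) * G d' h) with hg₂def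
    have hg₂m : Measurable g₂ := measurable_const.min ((hGm d').const_mul _)
    have hg₂1 : ∀ h, g₂ h ≤ 1 := fun h => min_le_left _ _
    have hpt : ∀ h, G d h ≤ g₂ h + ENNReal.ofReal (δ T) := by
      intro h
      have h1 : G d h ≤ min 1 (ENNReal.ofReal (Real.exp (ε T)) * G d' h + ENNReal.ofReal (δ T)) :=
        le_min (hG1 d h) (hGdp h)
      refine h1.trans ?_
      calc min 1 (ENNReal.ofReal (Real.exp (ε T)) * G d' h + ENNReal.ofReal (δ T))
          ≤ min (1 + ENNReal.ofReal (δ T))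
            (ENNReal.ofReal (Real.exp (ε T)) * G d' h + ENNReal.ofReal (δ T)) :=
            min_le_min (self_le_add_right _ _) le_rfl
        _ = g₂ h + ENNReal.ofReal (δ T) := min_add_add_right _ _ _
    have hsum_nonneg : 0 ≤ ∑ t ∈ Finset.range T, δ t :=
      Finset.sum_nonneg fun t _ => hδ t
    calc ∫⁻ h, G d h ∂(composedMech M T d)
        ≤ ∫⁻ h, (g₂ h + ENNReal.ofReal (δ T)) ∂(composedMech M T d) := lintegral_mono hpt
      _ = ∫⁻ h, g₂ h ∂(composedMech M T d) + ENNReal.ofReal (δ T) := by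
          rw [lintegral_add_right _ measurable_const, lintegral_const, measure_univ, mul_one]
      _ ≤ ((ENNReal.ofReal (Real.exp (∑ t ∈ Finset.range T, ε t)) *
            ∫⁻ h, g₂ h ∂(composedMech M T d')) +
            ENNReal.ofReal (∑ t ∈ Finset.range T, δ t)) + ENNReal.ofReal (δ T) :=
          add_le_add (IH d d' hdd' g₂ hg₂m hg₂1) le_rfl
      _ ≤ ((ENNReal.ofReal (Real.exp (∑ t ∈ Finset.range T, ε t)) *
            (ENNReal.ofReal (Real.exp (ε T)) * ∫⁻ h, G d' h ∂(composedMech M T d'))) +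
            ENNReal.ofReal (∑ t ∈ Finset.range T, δ t)) + ENNReal.ofReal (δ T) := by
          gcongr
          calc ∫⁻ h, g₂ h ∂(composedMech M T d')
              ≤ ∫⁻ h, ENNReal.ofReal (Real.exp (ε T)) * G d' h ∂(composedMech M T d') :=
                lintegral_mono fun h => min_le_right _ _
            _ = ENNReal.ofReal (Real.exp (ε T)) * ∫⁻ h, G d' h ∂(composedMech M T d') :=
                lintegral_const_mul _ (hGm d')
      _ = (ENNReal.ofReal (Real.exp (∑ t ∈ Finset.range (T+1), ε t)) *
            ∫⁻ h, G d' h ∂(composedMech M T d')) +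
            ENNReal.ofReal (∑ t ∈ Finset.range (T+1), δ t) := by
          rw [← mul_assoc, ← ENNReal.ofReal_mul (Real.exp_nonneg _), ← Real.exp_add,
            ← Finset.sum_range_succ, add_assoc,
            ← ENNReal.ofReal_add hsum_nonneg (hδ T), ← Finset.sum_range_succ]
end

section
/- Under adjacency where only one edge's reference d_{l_k} changes by at most θ in ℓ¹ norm, the ℓ²-sensitivity of the one-step LQR update mechanism M_t(D) = (x_1(t+1),…,x_N(t+1)) with x_i(t+1) = x_i(t) + c(t) K_{i,t} ∑_{j∈N_i} a_{ij}(x̂_{ij}(t) + d_{ij} − x_i(t)) satisfies Δ_{2,M,t} ≤ 2 c(t) ρ_K θ, where ρ_K = max_i ‖K_{i,t}‖. -/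
/-- ℓ² norm is at most the ℓ¹ norm on EuclideanSpace. -/
lemma euclid_norm_le_l1 {n : ℕ} (v : EuclideanSpace ℝ (Fin n)) :
    ‖v‖ ≤ ∑ k : Fin n, |v k| := by
  rw [EuclideanSpace.norm_eq]
  have h1 : ∑ k : Fin n, ‖v k‖ ^ 2 ≤ (∑ k : Fin n, ‖v k‖) ^ 2 :=
    Finset.sum_sq_le_sq_sum_of_nonneg (fun k _ => norm_nonneg _)
  calc Real.sqrt (∑ k : Fin n, ‖v k‖ ^ 2) ≤ Real.sqrt ((∑ k : Fin n, ‖v k‖) ^ 2) :=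
        Real.sqrt_le_sqrt h1
    _ = ∑ k : Fin n, ‖v k‖ :=
        Real.sqrt_sq (Finset.sum_nonneg fun k _ => norm_nonneg _)
    _ = ∑ k : Fin n, |v k| := by simp [Real.norm_eq_abs]

/-- Sensitivity of the one-step LQR update: if the two databases of references
`d, d'` differ only in the single edge `(i0, j0)` (and its reverse, with the
antisymmetry convention `d j i = -d i j`), by at most `θ` in `ℓ¹` norm, then the
`ℓ²`-sensitivity of the update
`x_i ↦ x_i + c K_i ∑_j a_{ij}(x̂_{ij} + d_{ij} − x_i)` is at most `2 c ρ_K θ`. -/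
theorem lqr_step_sensitivity {n N : ℕ}
    (c θ ρK : ℝ) (hc : 0 < c) (hθ : 0 ≤ θ)
    (K : Fin N → (EuclideanSpace ℝ (Fin n) →L[ℝ] EuclideanSpace ℝ (Fin n)))
    (hK : ∀ i, ‖K i‖ ≤ ρK)
    (a : Fin N → Fin N → ℝ) (ha : ∀ i j, a i j = 0 ∨ a i j = 1)
    (x : Fin N → EuclideanSpace ℝ (Fin n))
    (xhat : Fin N → Fin N → EuclideanSpace ℝ (Fin n))
    (d d' : Fin N → Fin N → EuclideanSpace ℝ (Fin n))
    (hanti : ∀ i j, d j i = -d i j) (hanti' : ∀ i j, d' j i = -d' i j)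
    (i0 j0 : Fin N) (hne : i0 ≠ j0)
    (hsame : ∀ i j, ¬((i = i0 ∧ j = j0) ∨ (i = j0 ∧ j = i0)) → d i j = d' i j)
    (hθbound : ∑ k : Fin n, |d i0 j0 k - d' i0 j0 k| ≤ θ) :
    Real.sqrt (∑ i : Fin N,
        ‖(x i + c • K i (∑ j : Fin N, a i j • (xhat i j + d i j - x i))) -
          (x i + c • K i (∑ j : Fin N, a i j • (xhat i j + d' i j - x i)))‖ ^ 2) ≤
      2 * c * ρK * θ := by
  have hρK : 0 ≤ ρK := le_trans (norm_nonneg _) (hK i0)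
  set δ : EuclideanSpace ℝ (Fin n) := d i0 j0 - d' i0 j0 with hδdef
  have hδ : ‖δ‖ ≤ θ := le_trans (euclid_norm_le_l1 δ) hθbound
  -- simplify each term
  have key : ∀ i : Fin N,
      (x i + c • K i (∑ j : Fin N, a i j • (xhat i j + d i j - x i))) -
        (x i + c • K i (∑ j : Fin N, a i j • (xhat i j + d' i j - x i))) =
      c • K i (∑ j : Fin N, a i j • (d i j - d' i j)) := by
    intro i
    rw [add_sub_add_left_eq_sub, ← smul_sub, ← map_sub, ← Finset.sum_sub_distrib]
    congr 2
    apply Finset.sum_congr rfl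
    intro j _
    rw [← smul_sub]
    congr 1
    abel
  have habs : ∀ i j, |a i j| ≤ 1 := by
    intro i j; rcases ha i j with h | h <;> simp [h]
  have hnorm_bound : ∀ (i : Fin N) (v : EuclideanSpace ℝ (Fin n)), ‖v‖ ≤ θ →
      ∀ j, ‖c • K i (a i j • v)‖ ≤ c * ρK * θ := by
    intro i v hv j
    rw [norm_smul]
    have h1 : ‖K i (a i j • v)‖ ≤ ρK * (‖a i j‖ * ‖v‖) := by
      calc ‖K i (a i j • v)‖ ≤ ‖K i‖ * ‖a i j • v‖ := (K i).le_opNorm _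
        _ ≤ ρK * (‖a i j‖ * ‖v‖) := by
            rw [norm_smul]
            exact mul_le_mul_of_nonneg_right (hK i) (by positivity)
    calc ‖c‖ * ‖K i (a i j • v)‖ ≤ c * (ρK * (‖a i j‖ * ‖v‖)) := by
          rw [Real.norm_eq_abs, abs_of_pos hc]
          exact mul_le_mul_of_nonneg_left h1 hc.le
      _ ≤ c * (ρK * (1 * θ)) := by
          apply mul_le_mul_of_nonneg_left _ hc.le
          apply mul_le_mul_of_nonneg_left _ hρK
          exact mul_le_mul (by simpa [Real.norm_eq_abs] using habs i j) hv (norm_nonneg _)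
            zero_le_one
      _ = c * ρK * θ := by ring
  -- the inner sums
  have hzero : ∀ i : Fin N, i ≠ i0 → i ≠ j0 →
      (∑ j : Fin N, a i j • (d i j - d' i j)) = 0 := by
    intro i hi hi'
    apply Finset.sum_eq_zero
    intro j _
    have : d i j = d' i j := hsame i j (by rintro (⟨h1, _⟩ | ⟨h1, _⟩) <;> [exact hi h1; exact hi' h1])
    rw [this, sub_self, smul_zero]
  have hi0sum : (∑ j : Fin N, a i0 j • (d i0 j - d' i0 j)) = a i0 j0 • δ := by
    rw [hδdef]
    apply Finset.sum_eq_single j0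
    · intro j _ hj
      have : d i0 j = d' i0 j := hsame i0 j (by rintro (⟨_, h2⟩ | ⟨h1, _⟩) <;> [exact hj h2; exact hne h1])
      rw [this, sub_self, smul_zero]
    · intro h; exact absurd (Finset.mem_univ j0) h
  have hj0sum : (∑ j : Fin N, a j0 j • (d j0 j - d' j0 j)) = a j0 i0 • (-δ) := by
    have heq : d j0 i0 - d' j0 i0 = -δ := by
      rw [hanti, hanti', hδdef]; abel
    rw [← heq]
    apply Finset.sum_eq_single i0
    · intro j _ hj
      have : d j0 j = d' j0 j := hsame j0 j
        (by rintro (⟨h1, _⟩ | ⟨_, h2⟩) <;> [exact hne h1.symm; exact hj h2])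
      rw [this, sub_self, smul_zero]
    · intro h; exact absurd (Finset.mem_univ i0) h
  set f : Fin N → ℝ := fun i =>
    ‖(x i + c • K i (∑ j : Fin N, a i j • (xhat i j + d i j - x i))) -
      (x i + c • K i (∑ j : Fin N, a i j • (xhat i j + d' i j - x i)))‖ ^ 2 with hf
  have hfsum : (∑ i : Fin N, f i) = f i0 + f j0 := by
    rw [← Finset.sum_pair hne]
    symm
    apply Finset.sum_subset (Finset.subset_univ _)
    intro i _ hi
    simp only [Finset.mem_insert, Finset.mem_singleton, not_or] at hi
    simp only [hf, key i, hzero i hi.1 hi.2, map_zero, smul_zero, norm_zero]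
    norm_num
  have hfi0 : f i0 ≤ (c * ρK * θ) ^ 2 := by
    have := hnorm_bound i0 δ hδ j0
    simp only [hf, key i0, hi0sum]
    exact pow_le_pow_left₀ (norm_nonneg _) this 2
  have hfj0 : f j0 ≤ (c * ρK * θ) ^ 2 := by
    have := hnorm_bound j0 (-δ) (by simpa using hδ) i0
    simp only [hf, key j0, hj0sum]
    exact pow_le_pow_left₀ (norm_nonneg _) this 2
  have hcρθ : 0 ≤ c * ρK * θ := by positivity
  have hsum : (∑ i : Fin N, f i) ≤ (2 * c * ρK * θ) ^ 2 := by
    rw [hfsum]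
    have : (2 * c * ρK * θ) ^ 2 = (c * ρK * θ) ^ 2 + (c * ρK * θ) ^ 2 + 2 * (c * ρK * θ) ^ 2 := by
      ring
    rw [this]
    have h2 : 0 ≤ 2 * (c * ρK * θ) ^ 2 := by positivity
    linarith [hfi0, hfj0]
  calc Real.sqrt (∑ i : Fin N, f i) ≤ Real.sqrt ((2 * c * ρK * θ) ^ 2) :=
        Real.sqrt_le_sqrt hsum
    _ = 2 * c * ρK * θ := Real.sqrt_sq (by positivity)
end
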